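/- (Theorem IIID.) Let A, S, Sc' be matrices over ℂ with A, S of size n×n and Cu, S_c of size p×n; let s ∈ ℂ with Φ := sI − A invertible, and set X := Φ⁻¹S. Let G be the (5n+p)×7n block matrix with block rows (v1,...,v5, e) and block columns (η1,...,η5, z0, w_u) given by: row v1 = [X, 0, 0, 0, 0 | 0, X]; row v2 = [0, X, 0, 0, 0 | Φ⁻¹, 0]; row v3 = [I_n, 0, 0, 0, 0 | 0, 0]; row v4 = [0, 0, 0, 0, 0 | 0, I_n]; row v5 = [0, X, 0, 0, 0 | Φ⁻¹, 0]; row e = [Cu, Cu·X, S_c, S_c, S_c | Cu·Φ⁻¹, 0]. Define m := inf{ max(|δ'|, |δ_c'|, ‖Δ_f‖) : δ', δ_c' ∈ ℝ, Δ_f a 2n×p complex matrix, det(I_{5n+p} − G·block-diag(δ'I_n, δ'I_n, δ_c'I_n, δ_c'I_n, δ_c'I_n, Δ_f)) = 0 }. Assume m > 0 and the infimum set is nonempty. Then for all δ, δ_c ∈ ℝ with max(|δ|, |δ_c|) < m, the matrix sI − A − δS is invertible and, with Cp := Cu + δ_c·S_c, the p×2n transfer matrix T := [Cp·(sI − A −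 δS)⁻¹ , Cp·(sI − A − δS)⁻¹·δS + δ_c·S_c] from (z(0), ŵ_u) to ê satisfies ‖T‖ ≤ 1/m. -/

import Mathlib

open scoped Matrix.Norms.L2Operator
open Matrix


noncomputable section
variable {n p : ℕ}

private def gOne (X F : Matrix (Fin n) (Fin n) ℂ) :
    Matrix (Fin n ⊕ (Fin n ⊕ (Fin n ⊕ (Fin n ⊕ Fin n)))) (Fin n ⊕ (Fin n ⊕ (Fin n ⊕ (Fin n ⊕ Fin n)))) ℂ :=
  fromRows (fromCols X 0)
    (fromRows (fromCols 0 (fromCols X 0))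
      (fromRows (fromCols 1 0)
        (fromRows 0 (fromCols 0 (fromCols X 0)))))

private def gTwo (X F : Matrix (Fin n) (Fin n) ℂ) :
    Matrix (Fin n ⊕ (Fin n ⊕ (Fin n ⊕ (Fin n ⊕ Fin n)))) (Fin n ⊕ Fin n) ℂ :=
  fromRows (fromCols 0 X)
    (fromRows (fromCols F 0)
      (fromRows 0 (fromRows (fromCols 0 1) (fromCols F 0))))

private def gThree (X : Matrix (Fin n) (Fin n) ℂ) (Cu Sc : Matrix (Fin p) (Fin n) ℂ) :
    Matrix (Fin p) (Fin n ⊕ (Fin n ⊕ (Fin n ⊕ (Fin n ⊕ Fin n)))) ℂ :=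
  fromCols Cu (fromCols (Cu * X) (fromCols Sc (fromCols Sc Sc)))

private def gFour (F : Matrix (Fin n) (Fin n) ℂ) (Cu : Matrix (Fin p) (Fin n) ℂ) :
    Matrix (Fin p) (Fin n ⊕ Fin n) ℂ :=
  fromCols (Cu * F) 0

private def dOne (a b : ℂ) (n : ℕ) :
    Matrix (Fin n ⊕ (Fin n ⊕ (Fin n ⊕ (Fin n ⊕ Fin n)))) (Fin n ⊕ (Fin n ⊕ (Fin n ⊕ (Fin n ⊕ Fin n)))) ℂ :=
  fromBlocks (a • (1 : Matrix (Fin n) (Fin n) ℂ)) 0 0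
    (fromBlocks (a • 1) 0 0
      (fromBlocks (b • 1) 0 0
        (fromBlocks (b • 1) 0 0 (b • 1))))

-- N := 1 - G11 * D1, explicit nested fromBlocks form
private def nMat (X : Matrix (Fin n) (Fin n) ℂ) (a : ℂ) :
    Matrix (Fin n ⊕ (Fin n ⊕ (Fin n ⊕ (Fin n ⊕ Fin n)))) (Fin n ⊕ (Fin n ⊕ (Fin n ⊕ (Fin n ⊕ Fin n)))) ℂ :=
  fromBlocks (1 - a • X) 0
    (fromRows 0 (fromRows (-(a • 1)) 0))
    (fromBlocks (1 - a • X) 0 (fromRows 0 (fromRows 0 (-(a • X)))) 1)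

private lemma one_sub_gOne_dOne (X F : Matrix (Fin n) (Fin n) ℂ) (a b : ℂ) :
    (1 : Matrix _ _ ℂ) - gOne X F * dOne a b n = nMat X a := by
  have h : gOne X F * dOne a b n =
      fromRows (fromCols (a • X) 0)
        (fromRows (fromCols 0 (fromCols (a • X) 0))
          (fromRows (fromCols (a • 1) 0)
            (fromRows 0 (fromCols 0 (fromCols (a • X) 0))))) := by
    simp only [gOne, dOne, fromRows_mul, fromCols_mul_fromBlocks, Matrix.mul_zero,
      Matrix.zero_mul, add_zero, zero_add, smul_zero, Matrix.mul_smul, Matrix.mul_one, Matrix.one_mul]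
  rw [h]
  ext (i | i | i | i | i) (j | j | j | j | j) <;>
    simp [nMat, Matrix.one_apply,
      Matrix.sub_apply]

private def kMat (X Rm : Matrix (Fin n) (Fin n) ℂ) (a : ℂ) :
    Matrix (Fin n ⊕ (Fin n ⊕ (Fin n ⊕ (Fin n ⊕ Fin n)))) (Fin n ⊕ (Fin n ⊕ (Fin n ⊕ (Fin n ⊕ Fin n)))) ℂ :=
  fromBlocks Rm 0
    (fromRows 0 (fromRows (a • Rm) 0))
    (fromBlocks Rm 0 (fromRows 0 (fromRows 0 (a • (X * Rm)))) 1)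

private lemma det_nMat (X : Matrix (Fin n) (Fin n) ℂ) (a : ℂ) :
    (nMat X a).det = (1 - a • X).det ^ 2 := by
  rw [nMat, det_fromBlocks_zero₁₂, det_fromBlocks_zero₁₂, det_one, mul_one, sq]

private lemma myFromRows_add {R : Type*} {m₁ m₂ n : Type*} [Add R] (A₁ B₁ : Matrix m₁ n R) (A₂ B₂ : Matrix m₂ n R) :
    fromRows A₁ A₂ + fromRows B₁ B₂ = fromRows (A₁ + B₁) (A₂ + B₂) := by
  ext (i|i) j <;> simp

private lemma mySmul_fromCols {R S : Type*} {m n₁ n₂ : Type*} [SMul S R] (a : S)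
    (A₁ : Matrix m n₁ R) (A₂ : Matrix m n₂ R) :
    a • fromCols A₁ A₂ = fromCols (a • A₁) (a • A₂) := by
  ext i (j|j) <;> simp

private lemma mySmul_fromRows {R S : Type*} {m₁ m₂ n : Type*} [SMul S R] (a : S)
    (A₁ : Matrix m₁ n R) (A₂ : Matrix m₂ n R) :
    a • fromRows A₁ A₂ = fromRows (a • A₁) (a • A₂) := by
  ext (i|i) j <;> simp

private lemma myFromColumns_add {R : Type*} {m n₁ n₂ : Type*} [Add R] (A₁ B₁ : Matrix m n₁ R) (A₂ B₂ : Matrix m n₂ R) :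
    fromCols A₁ A₂ + fromCols B₁ B₂ = fromCols (A₁ + B₁) (A₂ + B₂) := by
  ext i (j|j) <;> simp

private lemma nMat_kMat (X Rm : Matrix (Fin n) (Fin n) ℂ) (a : ℂ)
    (hWR : (1 - a • X) * Rm = 1) (hRW : Rm * (1 - a • X) = 1) :
    nMat X a * kMat X Rm a = 1 ∧ kMat X Rm a * nMat X a = 1 := by
  constructor <;>
  · rw [nMat, kMat, fromBlocks_multiply]
    simp only [fromBlocks_multiply, fromBlocks_mul_fromRows, fromRows_mul,
      Matrix.mul_zero, Matrix.zero_mul, Matrix.mul_one, Matrix.one_mul,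
      add_zero, zero_add, smul_zero, Matrix.smul_mul, Matrix.mul_smul,
      neg_mul, Matrix.neg_mul, Matrix.mul_assoc, mul_assoc, hWR, hRW, mul_one, smul_neg,
      myFromRows_add, fromRows_zero, neg_add_cancel, add_neg_cancel,
      add_zero, zero_add, fromBlocks_one]

private lemma schur_eq (X F Rm : Matrix (Fin n) (Fin n) ℂ) (Cu Sc : Matrix (Fin p) (Fin n) ℂ) (a b : ℂ)
    (hWR : (1 - a • X) * Rm = 1) (hRW : Rm * (1 - a • X) = 1) :
    gFour F Cu + gThree X Cu Sc * dOne a b n * kMat X Rm a * gTwo X F =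
      fromCols ((Cu + b • Sc) * (Rm * F)) (a • ((Cu + b • Sc) * (Rm * X)) + b • Sc) := by
  rw [gFour, gThree, gTwo, dOne, kMat]
  simp only [fromBlocks_multiply, fromBlocks_mul_fromRows, fromRows_mul,
    fromCols_mul_fromBlocks, fromCols_mul_fromRows, mul_fromCols,
    Matrix.mul_zero, Matrix.zero_mul, Matrix.mul_one, Matrix.one_mul,
    add_zero, zero_add, smul_zero, Matrix.smul_mul, Matrix.mul_smul,
    myFromRows_add, myFromColumns_add, fromRows_zero, fromCols_zero,
    Matrix.mul_assoc, mul_assoc, hWR, hRW, mul_one, smul_smul, mySmul_fromCols, mySmul_fromRows,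
    myFromColumns_add]
  have hR1 : Rm = 1 + a • (X * Rm) := by
    have h := hWR
    rw [Matrix.sub_mul, Matrix.one_mul, Matrix.smul_mul, sub_eq_iff_eq_add] at h
    exact h
  have hR1F : Rm * F = F + a • (X * (Rm * F)) := by
    conv_lhs => rw [hR1]
    simp only [Matrix.add_mul, Matrix.one_mul, Matrix.smul_mul, Matrix.mul_assoc, mul_assoc]
  rw [fromCols_ext_iff]
  constructor
  · conv_rhs => rw [hR1F]
    simp only [Matrix.mul_add, Matrix.add_mul, Matrix.smul_mul, Matrix.mul_smul,
      Matrix.mul_assoc, mul_assoc]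
    module
  · simp only [Matrix.mul_add, Matrix.add_mul, Matrix.smul_mul, Matrix.mul_smul,
      Matrix.mul_assoc, mul_assoc]
    module

private lemma myFromBlocks_sub {R : Type*} {m₁ m₂ n₁ n₂ : Type*} [Sub R]
    (A₁ : Matrix m₁ n₁ R) (B₁ : Matrix m₁ n₂ R) (C₁ : Matrix m₂ n₁ R) (D₁ : Matrix m₂ n₂ R)
    (A₂ : Matrix m₁ n₁ R) (B₂ : Matrix m₁ n₂ R) (C₂ : Matrix m₂ n₁ R) (D₂ : Matrix m₂ n₂ R) :
    fromBlocks A₁ B₁ C₁ D₁ - fromBlocks A₂ B₂ C₂ D₂ =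
      fromBlocks (A₁ - A₂) (B₁ - B₂) (C₁ - C₂) (D₁ - D₂) := by
  ext (i|i) (j|j) <;> simp

private lemma keyDet (X F Rm : Matrix (Fin n) (Fin n) ℂ) (Cu Sc : Matrix (Fin p) (Fin n) ℂ)
    (a b : ℂ) (Δf : Matrix (Fin n ⊕ Fin n) (Fin p) ℂ)
    (hWR : (1 - a • X) * Rm = 1) (hRW : Rm * (1 - a • X) = 1) :
    ((1 : Matrix ((Fin n ⊕ (Fin n ⊕ (Fin n ⊕ (Fin n ⊕ Fin n)))) ⊕ Fin p)
                 ((Fin n ⊕ (Fin n ⊕ (Fin n ⊕ (Fin n ⊕ Fin n)))) ⊕ Fin p) ℂ)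
      - fromBlocks (gOne X F) (gTwo X F) (gThree X Cu Sc) (gFour F Cu) *
          fromBlocks (dOne a b n) 0 0 Δf).det =
    (1 - a • X).det ^ 2 *
      (1 - (fromCols ((Cu + b • Sc) * (Rm * F))
              (a • ((Cu + b • Sc) * (Rm * X)) + b • Sc)) * Δf).det := by
  have hGD : fromBlocks (gOne X F) (gTwo X F) (gThree X Cu Sc) (gFour F Cu) *
      fromBlocks (dOne a b n) 0 0 Δf =
      fromBlocks (gOne X F * dOne a b n) (gTwo X F * Δf)
        (gThree X Cu Sc * dOne a b n) (gFour F Cu * Δf) := by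
    rw [fromBlocks_multiply]
    simp only [Matrix.mul_zero, Matrix.zero_mul, add_zero, zero_add]
  rw [hGD, ← fromBlocks_one, myFromBlocks_sub]
  rw [one_sub_gOne_dOne, zero_sub, zero_sub]
  haveI : Invertible (nMat X a) :=
    ⟨kMat X Rm a, (nMat_kMat X Rm a hWR hRW).2, (nMat_kMat X Rm a hWR hRW).1⟩
  rw [det_fromBlocks₁₁, det_nMat]
  congr 1
  have hinv : ⅟(nMat X a) = kMat X Rm a := invOf_eq_right_inv (nMat_kMat X Rm a hWR hRW).1
  rw [hinv]
  rw [← schur_eq X F Rm Cu Sc a b hWR hRW]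
  simp only [Matrix.neg_mul, Matrix.mul_neg, neg_neg, sub_neg_eq_add]
  rw [Matrix.add_mul, sub_add_eq_sub_sub]
  simp only [Matrix.mul_assoc]

private lemma keyDet0 (X F : Matrix (Fin n) (Fin n) ℂ) (Cu Sc : Matrix (Fin p) (Fin n) ℂ)
    (a b : ℂ) :
    ((1 : Matrix ((Fin n ⊕ (Fin n ⊕ (Fin n ⊕ (Fin n ⊕ Fin n)))) ⊕ Fin p)
                 ((Fin n ⊕ (Fin n ⊕ (Fin n ⊕ (Fin n ⊕ Fin n)))) ⊕ Fin p) ℂ)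
      - fromBlocks (gOne X F) (gTwo X F) (gThree X Cu Sc) (gFour F Cu) *
          fromBlocks (dOne a b n) 0 0 (0 : Matrix (Fin n ⊕ Fin n) (Fin p) ℂ)).det =
    (1 - a • X).det ^ 2 := by
  have hGD : fromBlocks (gOne X F) (gTwo X F) (gThree X Cu Sc) (gFour F Cu) *
      fromBlocks (dOne a b n) 0 0 (0 : Matrix (Fin n ⊕ Fin n) (Fin p) ℂ) =
      fromBlocks (gOne X F * dOne a b n) 0 (gThree X Cu Sc * dOne a b n) 0 := by
    rw [fromBlocks_multiply]
    simp only [Matrix.mul_zero, Matrix.zero_mul, add_zero, zero_add]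
  rw [hGD, ← fromBlocks_one, myFromBlocks_sub]
  rw [one_sub_gOne_dOne (b := b), sub_zero, sub_zero, det_fromBlocks_zero₁₂, det_nMat, det_one,
    mul_one]


private lemma exists_norm_attain {E F : Type*} [NormedAddCommGroup E] [NormedSpace ℂ E]
    [NormedAddCommGroup F] [NormedSpace ℂ F] [FiniteDimensional ℂ E]
    (f : E →L[ℂ] F) (hf : 0 < ‖f‖) : ∃ x : E, ‖x‖ = 1 ∧ ‖f x‖ = ‖f‖ := by
  have hnt : Nontrivial E := by
    by_contra h
    have : Subsingleton E := not_nontrivial_iff_subsingleton.mp h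
    have : f = 0 := by ext x; rw [Subsingleton.elim x 0]; simp
    rw [this, norm_zero] at hf; exact lt_irrefl _ hf
  obtain ⟨x0, hx0⟩ : ∃ x : E, ‖x‖ = 1 := exists_norm_eq E zero_le_one
  have hcs : IsCompact (Metric.sphere (0 : E) 1) := isCompact_sphere _ _
  have hne : (Metric.sphere (0 : E) 1).Nonempty := ⟨x0, by simpa using hx0⟩
  have hcont : ContinuousOn (fun x : E => ‖f x‖) (Metric.sphere 0 1) :=
    (continuous_norm.comp f.continuous).continuousOn
  obtain ⟨x, hxs, hmax⟩ := hcs.exists_isMaxOn hne hcont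
  have hx1 : ‖x‖ = 1 := by simpa using hxs
  refine ⟨x, hx1, le_antisymm (by simpa [hx1] using f.le_opNorm x) ?_⟩
  refine f.opNorm_le_bound (norm_nonneg _) fun y => ?_
  rcases eq_or_ne y 0 with rfl | hy
  · simp
  · have hyn : ‖y‖ ≠ 0 := norm_ne_zero_iff.mpr hy
    have hmem : (‖y‖⁻¹ : ℝ) • y ∈ Metric.sphere (0 : E) 1 := by
      simp [norm_smul, abs_of_nonneg (inv_nonneg.mpr (norm_nonneg y)), inv_mul_cancel₀ hyn]
    have h1 : ‖f (‖y‖⁻¹ • y)‖ ≤ ‖f x‖ := hmax hmem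
    rw [f.map_smul_of_tower, norm_smul, norm_inv, norm_norm] at h1
    calc ‖f y‖ = ‖y‖ * (‖y‖⁻¹ * ‖f y‖) := by field_simp
    _ ≤ ‖y‖ * ‖f x‖ := mul_le_mul_of_nonneg_left h1 (norm_nonneg y)
    _ = ‖f x‖ * ‖y‖ := mul_comm _ _

private lemma exists_destab {q r : Type*} [Fintype q] [Fintype r] [DecidableEq q] [DecidableEq r]
    (T : Matrix q r ℂ) (hT : 0 < ‖T‖) :
    ∃ Δ : Matrix r q ℂ, ‖Δ‖ ≤ 1 / ‖T‖ ∧ (1 - T * Δ).det = 0 := by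
  set f := (Matrix.toEuclideanLin (𝕜 := ℂ) (m := q) (n := r)).trans
    LinearMap.toContinuousLinearMap T with hf
  have hfT : ‖T‖ = ‖f‖ := Matrix.l2_opNorm_def T
  obtain ⟨x, hx1, hfx⟩ := exists_norm_attain f (hfT ▸ hT)
  set y : EuclideanSpace ℂ q := f x with hy
  have hyT : ‖y‖ = ‖T‖ := by rw [hy, hfx, hfT]
  have hTx : T *ᵥ (x : r → ℂ) = (y : q → ℂ) := by
    rw [hy]
    show T *ᵥ x = (f x : q → ℂ)
    simp only [hf, LinearEquiv.trans_apply, LinearMap.coe_toContinuousLinearMap',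
      Matrix.toEuclideanLin_apply]
  set Δ : Matrix r q ℂ := Matrix.of fun j i => ((‖T‖ : ℂ) ^ 2)⁻¹ * (x j * star (y i)) with hΔ
  have hyy : ∑ i, star (y i) * y i = ((‖T‖ : ℂ) ^ 2) := by
    have : (inner ℂ y y : ℂ) = (‖y‖ : ℂ) ^ 2 := inner_self_eq_norm_sq_to_K y
    rw [PiLp.inner_apply] at this
    simpa [RCLike.inner_apply, hyT, Complex.conj_mul'] using this
  have hΔy : Δ *ᵥ (y : q → ℂ) = (x : r → ℂ) := by
    funext j
    simp only [Matrix.mulVec, dotProduct, hΔ, Matrix.of_apply]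
    have : ∑ i, ((‖T‖ : ℂ) ^ 2)⁻¹ * (x j * star (y i)) * y i
        = ((‖T‖ : ℂ) ^ 2)⁻¹ * x j * ∑ i, star (y i) * y i := by
      rw [Finset.mul_sum]; congr 1; funext i; ring
    rw [this, hyy]
    have hT2 : ((‖T‖ : ℂ) ^ 2) ≠ 0 := by
      simp [pow_eq_zero_iff, Complex.ofReal_eq_zero, ne_of_gt hT]
    have hT1 : (‖T‖ : ℂ) ≠ 0 := by exact_mod_cast ne_of_gt hT
    field_simp
  have hy0 : (y : q → ℂ) ≠ 0 := by
    intro h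
    have : y = 0 := by simpa using h
    rw [this, norm_zero] at hyT
    exact ne_of_gt hT hyT.symm
  have hdet : (1 - T * Δ).det = 0 := by
    rw [← Matrix.exists_mulVec_eq_zero_iff]
    refine ⟨y, hy0, ?_⟩
    rw [Matrix.sub_mulVec, Matrix.one_mulVec, ← Matrix.mulVec_mulVec, hΔy, hTx, sub_self]
  refine ⟨Δ, ?_, hdet⟩
  rw [Matrix.l2_opNorm_def]
  refine ContinuousLinearMap.opNorm_le_bound _ (by positivity) fun v => ?_
  have happ : ((Matrix.toEuclideanLin (𝕜 := ℂ) (m := r) (n := q)).trans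
      LinearMap.toContinuousLinearMap Δ) v
      = ((((‖T‖ : ℂ) ^ 2)⁻¹ * (inner ℂ y v : ℂ)) • x : EuclideanSpace ℂ r) := by
    apply (WithLp.equiv 2 (r → ℂ)).injective
    funext j
    show (Δ *ᵥ (v : q → ℂ)) j = _
    simp only [Matrix.mulVec, dotProduct, hΔ, Matrix.of_apply]
    show ∑ i, ((‖T‖ : ℂ) ^ 2)⁻¹ * (x j * star (y i)) * v i
        = (((‖T‖ : ℂ) ^ 2)⁻¹ * (inner ℂ y v : ℂ)) * x j
    rw [PiLp.inner_apply]
    simp only [RCLike.inner_apply, starRingEnd_apply]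
    rw [Finset.mul_sum, Finset.sum_mul]
    congr 1; funext i; ring
  rw [happ, norm_smul]
  have hinner : ‖(inner ℂ y v : ℂ)‖ ≤ ‖T‖ * ‖v‖ := by
    calc ‖(inner ℂ y v : ℂ)‖ ≤ ‖y‖ * ‖v‖ := norm_inner_le_norm y v
    _ = ‖T‖ * ‖v‖ := by rw [hyT]
  have hcn : ‖((‖T‖ : ℂ) ^ 2)⁻¹‖ = (‖T‖ ^ 2)⁻¹ := by
    rw [norm_inv, norm_pow, Complex.norm_real, Real.norm_eq_abs, abs_of_nonneg hT.le]
  calc ‖((‖T‖ : ℂ) ^ 2)⁻¹ * (inner ℂ y v : ℂ)‖ * ‖x‖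
      = ‖((‖T‖ : ℂ) ^ 2)⁻¹‖ * ‖(inner ℂ y v : ℂ)‖ := by rw [norm_mul, hx1, mul_one]
    _ = (‖T‖ ^ 2)⁻¹ * ‖(inner ℂ y v : ℂ)‖ := by rw [hcn]
    _ ≤ (‖T‖ ^ 2)⁻¹ * (‖T‖ * ‖v‖) := by
        exact mul_le_mul_of_nonneg_left hinner (by positivity)
    _ = 1 / ‖T‖ * ‖v‖ := by
        have hT0 : ‖T‖ ≠ 0 := ne_of_gt hT
        field_simp

end

/-- Theorem IIID: robust performance in the unperturbed formulation with initial state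
error and uncertain output matrix `Cp = Cu + δ_c S_c`.  `G` is the block matrix with
block rows `(v1,…,v5,e)` and block columns `(η1,…,η5,z0,w_u)` of the paper, and
`m = inf { max(|δ'|,|δ_c'|,‖Δ_f‖) : det(I − G·block-diag(δ'I,δ'I,δ_c'I,δ_c'I,δ_c'I,Δ_f)) = 0 }`.
Then for `max(|δ|,|δ_c|) < m`, `sI − A − δS` is invertible and the transfer matrix
`[Cp(sI − A − δS)⁻¹ , Cp(sI − A − δS)⁻¹δS + δ_c S_c]` has norm at most `1/m`. -/
theorem thm_IIID_unperturbed_with_initial_error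
    {n p : ℕ}
    (A S : Matrix (Fin n) (Fin n) ℂ) (Cu Sc : Matrix (Fin p) (Fin n) ℂ) (s : ℂ)
    (hΦ : IsUnit (s • (1 : Matrix (Fin n) (Fin n) ℂ) - A))
    (X : Matrix (Fin n) (Fin n) ℂ)
    (hX : X = (s • (1 : Matrix (Fin n) (Fin n) ℂ) - A)⁻¹ * S)
    (G : Matrix ((Fin n ⊕ (Fin n ⊕ (Fin n ⊕ (Fin n ⊕ Fin n)))) ⊕ Fin p)
                ((Fin n ⊕ (Fin n ⊕ (Fin n ⊕ (Fin n ⊕ Fin n)))) ⊕ (Fin n ⊕ Fin n)) ℂ)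
    (hG : G = Matrix.fromBlocks
        -- v-rows × η-columns
        (Matrix.fromRows (Matrix.fromCols X 0)
          (Matrix.fromRows (Matrix.fromCols 0 (Matrix.fromCols X 0))
            (Matrix.fromRows (Matrix.fromCols 1 0)
              (Matrix.fromRows 0 (Matrix.fromCols 0 (Matrix.fromCols X 0))))))
        -- v-rows × (z0, w_u)-columns
        (Matrix.fromRows (Matrix.fromCols 0 X)
          (Matrix.fromRows
            (Matrix.fromCols ((s • (1 : Matrix (Fin n) (Fin n) ℂ) - A)⁻¹) 0)
            (Matrix.fromRows 0
              (Matrix.fromRows (Matrix.fromCols 0 1)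
                (Matrix.fromCols ((s • (1 : Matrix (Fin n) (Fin n) ℂ) - A)⁻¹) 0)))))
        -- e-row × η-columns
        (Matrix.fromCols Cu
          (Matrix.fromCols (Cu * X) (Matrix.fromCols Sc (Matrix.fromCols Sc Sc))))
        -- e-row × (z0, w_u)-columns
        (Matrix.fromCols (Cu * (s • (1 : Matrix (Fin n) (Fin n) ℂ) - A)⁻¹) 0))
    (P : Set ℝ)
    (hP : P = {x : ℝ | ∃ (δ' δc' : ℝ)
        (Δf : Matrix (Fin n ⊕ Fin n) (Fin p) ℂ),
        x = max |δ'| (max |δc'| ‖Δf‖) ∧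
        ((1 : Matrix ((Fin n ⊕ (Fin n ⊕ (Fin n ⊕ (Fin n ⊕ Fin n)))) ⊕ Fin p)
                     ((Fin n ⊕ (Fin n ⊕ (Fin n ⊕ (Fin n ⊕ Fin n)))) ⊕ Fin p) ℂ)
          - G * Matrix.fromBlocks
              (Matrix.fromBlocks ((δ' : ℂ) • (1 : Matrix (Fin n) (Fin n) ℂ)) 0 0
                (Matrix.fromBlocks ((δ' : ℂ) • (1 : Matrix (Fin n) (Fin n) ℂ)) 0 0
                  (Matrix.fromBlocks ((δc' : ℂ) • (1 : Matrix (Fin n) (Fin n) ℂ)) 0 0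
                    (Matrix.fromBlocks ((δc' : ℂ) • (1 : Matrix (Fin n) (Fin n) ℂ)) 0 0
                      ((δc' : ℂ) • (1 : Matrix (Fin n) (Fin n) ℂ))))))
              0 0 Δf).det = 0})
    (hne : P.Nonempty) (hm : 0 < sInf P) :
    ∀ δ δc : ℝ, max |δ| |δc| < sInf P →
      IsUnit (s • (1 : Matrix (Fin n) (Fin n) ℂ) - A - (δ : ℂ) • S) ∧
      ‖Matrix.fromCols
          ((Cu + (δc : ℂ) • Sc) * (s • (1 : Matrix (Fin n) (Fin n) ℂ) - A - (δ : ℂ) • S)⁻¹)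
          ((Cu + (δc : ℂ) • Sc) * (s • (1 : Matrix (Fin n) (Fin n) ℂ) - A - (δ : ℂ) • S)⁻¹
              * ((δ : ℂ) • S) + (δc : ℂ) • Sc)‖ ≤ 1 / sInf P := by
  intro δ δc hlt
  have hbb : BddBelow P := by
    refine ⟨0, fun t ht => ?_⟩
    rw [hP] at ht
    obtain ⟨d1, d2, Df, rfl, -⟩ := ht
    exact le_trans (abs_nonneg _) (le_max_left _ _)
  have hΦd : IsUnit (s • (1 : Matrix (Fin n) (Fin n) ℂ) - A).det :=
    (Matrix.isUnit_iff_isUnit_det _).mp hΦ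
  have hΦX : (s • (1 : Matrix (Fin n) (Fin n) ℂ) - A) * X = S := by
    rw [hX, ← Matrix.mul_assoc, Matrix.mul_nonsing_inv _ hΦd, Matrix.one_mul]
  have hΨe : s • (1 : Matrix (Fin n) (Fin n) ℂ) - A - (δ : ℂ) • S =
      (s • (1 : Matrix (Fin n) (Fin n) ℂ) - A) * (1 - (δ : ℂ) • X) := by
    rw [Matrix.mul_sub, Matrix.mul_one, Matrix.mul_smul, hΦX]
  have hG' : G = Matrix.fromBlocks (gOne X ((s • (1 : Matrix (Fin n) (Fin n) ℂ) - A)⁻¹))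
      (gTwo X ((s • (1 : Matrix (Fin n) (Fin n) ℂ) - A)⁻¹)) (gThree X Cu Sc)
      (gFour ((s • (1 : Matrix (Fin n) (Fin n) ℂ) - A)⁻¹) Cu) := by
    rw [hG]; rfl
  -- Step 1: `1 - δ • X` is invertible
  have hWd : IsUnit (1 - (δ : ℂ) • X).det := by
    by_contra h
    have h0 : (1 - (δ : ℂ) • X).det = 0 := by
      simpa [isUnit_iff_ne_zero, not_not] using h
    have hmem : max |δ| (max |δc| ‖(0 : Matrix (Fin n ⊕ Fin n) (Fin p) ℂ)‖) ∈ P := by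
      rw [hP]
      refine ⟨δ, δc, 0, rfl, ?_⟩
      rw [hG']
      exact (keyDet0 X ((s • (1 : Matrix (Fin n) (Fin n) ℂ) - A)⁻¹) Cu Sc (δ : ℂ)
        (δc : ℂ)).trans (by rw [h0]; ring)
    have hle := csInf_le hbb hmem
    rw [norm_zero, max_eq_left (abs_nonneg δc)] at hle
    exact absurd (lt_of_le_of_lt hle hlt) (lt_irrefl _)
  have hWu : IsUnit (1 - (δ : ℂ) • X) := (Matrix.isUnit_iff_isUnit_det _).mpr hWd
  have hUnit : IsUnit (s • (1 : Matrix (Fin n) (Fin n) ℂ) - A - (δ : ℂ) • S) := by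
    rw [hΨe]; exact hΦ.mul hWu
  refine ⟨hUnit, ?_⟩
  have hWR : (1 - (δ : ℂ) • X) * (1 - (δ : ℂ) • X)⁻¹ = 1 := Matrix.mul_nonsing_inv _ hWd
  have hRW : (1 - (δ : ℂ) • X)⁻¹ * (1 - (δ : ℂ) • X) = 1 := Matrix.nonsing_inv_mul _ hWd
  have hΨinv : (s • (1 : Matrix (Fin n) (Fin n) ℂ) - A - (δ : ℂ) • S)⁻¹ =
      (1 - (δ : ℂ) • X)⁻¹ * (s • (1 : Matrix (Fin n) (Fin n) ℂ) - A)⁻¹ := by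
    rw [hΨe, Matrix.mul_inv_rev]
  have hTeq : Matrix.fromCols
      ((Cu + (δc : ℂ) • Sc) * (s • (1 : Matrix (Fin n) (Fin n) ℂ) - A - (δ : ℂ) • S)⁻¹)
      ((Cu + (δc : ℂ) • Sc) * (s • (1 : Matrix (Fin n) (Fin n) ℂ) - A - (δ : ℂ) • S)⁻¹
          * ((δ : ℂ) • S) + (δc : ℂ) • Sc) =
      Matrix.fromCols
        ((Cu + (δc : ℂ) • Sc) * ((1 - (δ : ℂ) • X)⁻¹ *
          (s • (1 : Matrix (Fin n) (Fin n) ℂ) - A)⁻¹))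
        ((δ : ℂ) • ((Cu + (δc : ℂ) • Sc) * ((1 - (δ : ℂ) • X)⁻¹ * X)) + (δc : ℂ) • Sc) := by
    rw [hΨinv, Matrix.fromCols_ext_iff]
    refine ⟨rfl, ?_⟩
    congr 1
    rw [Matrix.mul_smul, hX]
    rw [Matrix.mul_assoc (Cu + (δc : ℂ) • Sc), Matrix.mul_assoc]
  rw [hTeq]
  by_contra hgt
  push_neg at hgt
  have h1m : 0 < 1 / sInf P := by positivity
  have hTpos : 0 < ‖Matrix.fromCols
        ((Cu + (δc : ℂ) • Sc) * ((1 - (δ : ℂ) • X)⁻¹ *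
          (s • (1 : Matrix (Fin n) (Fin n) ℂ) - A)⁻¹))
        ((δ : ℂ) • ((Cu + (δc : ℂ) • Sc) * ((1 - (δ : ℂ) • X)⁻¹ * X)) + (δc : ℂ) • Sc)‖ :=
    lt_trans h1m hgt
  obtain ⟨Δ, hΔle, hΔdet⟩ := exists_destab _ hTpos
  have hmem : max |δ| (max |δc| ‖Δ‖) ∈ P := by
    rw [hP]
    refine ⟨δ, δc, Δ, rfl, ?_⟩
    rw [hG']
    exact (keyDet X ((s • (1 : Matrix (Fin n) (Fin n) ℂ) - A)⁻¹) ((1 - (δ : ℂ) • X)⁻¹) Cu Sc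
      (δ : ℂ) (δc : ℂ) Δ hWR hRW).trans (by rw [hΔdet, mul_zero])
  have hle := csInf_le hbb hmem
  have hΔlt : ‖Δ‖ < sInf P := by
    refine lt_of_le_of_lt hΔle ?_
    have := one_div_lt_one_div_of_lt h1m hgt
    rwa [one_div_one_div] at this
  have hflt : max |δ| (max |δc| ‖Δ‖) < sInf P :=
    max_lt (lt_of_le_of_lt (le_max_left _ _) hlt)
      (max_lt (lt_of_le_of_lt (le_max_right _ _) hlt) hΔlt)
  exact absurd (lt_of_le_of_lt hle hflt) (lt_irrefl _)
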